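/- Let 𝒞_S ⊆ 𝔽₂^ℓ be a code with minimum Hamming distance at least 3, and define 𝒞 = {X ∈ 𝔽₂^{ℓ×n} : (parity(x₁),…,parity(x_ℓ)) ∈ 𝒞_S}. Then for any two distinct X, X' ∈ 𝒞, the sum matrices X⁺, X'⁺ ∈ 𝔽₂^{(ℓ+1)×n} are at Hamming distance at least 3; hence 𝒞 corrects a single substitution in the sum channel. -/

import Mathlib

/-- The sum matrix of `X`: the rows of `X` followed by their bitwise sum. -/
def sumMatrix {ℓ n : ℕ} (X : Fin ℓ → Fin n → ZMod 2) : Fin (ℓ + 1) → Fin n → ZMod 2 :=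
  Fin.snoc X (fun j => ∑ i, X i j)

/-- Entrywise Hamming distance between two matrices. -/
def hd {m n : ℕ} (A B : Fin m → Fin n → ZMod 2) : ℕ :=
  (Finset.univ.filter fun p : Fin m × Fin n => A p.1 p.2 ≠ B p.1 p.2).card

lemma even_card_ne {α : Type*} [Fintype α] [DecidableEq α] {f g : α → ZMod 2}
    (h : ∑ x, f x = ∑ x, g x) :
    Even (Finset.univ.filter fun x => f x ≠ g x).card := by
  have pt : ∀ a b : ZMod 2, a - b = if a ≠ b then (1 : ZMod 2) else 0 := by decide
  have key : ((Finset.univ.filter fun x => f x ≠ g x).card : ZMod 2)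
      = ∑ x, (f x - g x) := by
    rw [Finset.sum_congr rfl fun x _ => pt (f x) (g x), Finset.sum_boole]
  have h0 : ∑ x, (f x - g x) = 0 := by
    rw [Finset.sum_sub_distrib, h, sub_self]
  rw [h0] at key
  have := (ZMod.natCast_eq_zero_iff _ 2).mp key
  exact (even_iff_two_dvd).mpr this

theorem stmt18 (ℓ n : ℕ) (hl : 1 ≤ ℓ) (hn : 1 ≤ n)
    (CS : Set (Fin ℓ → ZMod 2))
    (hdist : ∀ u ∈ CS, ∀ v ∈ CS, u ≠ v → 3 ≤ hammingDist u v)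
    (𝒞 : Set (Fin ℓ → Fin n → ZMod 2))
    (h𝒞 : 𝒞 = {X | (fun i => ∑ j, X i j) ∈ CS}) :
    ∀ X ∈ 𝒞, ∀ X' ∈ 𝒞, X ≠ X' → 3 ≤ hd (sumMatrix X) (sumMatrix X') := by
  subst h𝒞
  intro X hX X' hX' hne
  by_contra hle
  push_neg at hle
  set A := sumMatrix X with hA
  set B := sumMatrix X' with hB
  set S : Finset (Fin (ℓ + 1) × Fin n) :=
    Finset.univ.filter (fun p => A p.1 p.2 ≠ B p.1 p.2) with hS
  have hScard : S.card ≤ 2 := by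
    have : hd A B ≤ 2 := by omega
    simpa [hd, hS] using this
  -- step 1: some entry differs in the first ℓ rows
  have hEx : ∃ i j, X i j ≠ X' i j := by
    by_contra hc
    push_neg at hc
    exact hne (funext fun i => funext fun j => hc i j)
  obtain ⟨i, j0, hij⟩ := hEx
  have hAi : ∀ (i : Fin ℓ) (j : Fin n), A i.castSucc j = X i j := by
    intro i j; simp [hA, sumMatrix]
  have hBi : ∀ (i : Fin ℓ) (j : Fin n), B i.castSucc j = X' i j := by
    intro i j; simp [hB, sumMatrix]
  have hmem0 : (i.castSucc, j0) ∈ S := by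
    simp only [hS, Finset.mem_filter, Finset.mem_univ, true_and]
    rw [hAi, hBi]; exact hij
  -- step 2: column j0 has even weight, get a second element
  have hcolsum : ∀ (Y : Fin ℓ → Fin n → ZMod 2) (j : Fin n),
      ∑ r : Fin (ℓ + 1), sumMatrix Y r j = 0 := by
    intro Y j
    rw [Fin.sum_univ_castSucc]
    have addself : ∀ a : ZMod 2, a + a = 0 := by decide
    simp [sumMatrix, addself]
  have hcol : Even ((Finset.univ.filter fun r : Fin (ℓ+1) => A r j0 ≠ B r j0).card) :=
    even_card_ne (by rw [hcolsum X j0, hcolsum X' j0])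
  have hmemcol : i.castSucc ∈ (Finset.univ.filter fun r : Fin (ℓ+1) => A r j0 ≠ B r j0) := by
    simp only [Finset.mem_filter, Finset.mem_univ, true_and]
    rw [hAi, hBi]; exact hij
  have hcol2 : 2 ≤ (Finset.univ.filter fun r : Fin (ℓ+1) => A r j0 ≠ B r j0).card := by
    rcases hcol with ⟨k, hk⟩
    have : 0 < (Finset.univ.filter fun r : Fin (ℓ+1) => A r j0 ≠ B r j0).card :=
      Finset.card_pos.mpr ⟨_, hmemcol⟩
    omega
  obtain ⟨i1, hi1mem, hi1ne⟩ := Finset.exists_mem_ne hcol2 i.castSucc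
  have hmem1 : (i1, j0) ∈ S := by
    simp only [hS, Finset.mem_filter, Finset.mem_univ, true_and]
    simpa using hi1mem
  -- S equals the pair
  have hpair : S = {(i.castSucc, j0), (i1, j0)} := by
    refine (Finset.eq_of_subset_of_card_le ?_ ?_).symm
    · intro p hp
      simp only [Finset.mem_insert, Finset.mem_singleton] at hp
      rcases hp with h | h <;> subst h <;> assumption
    · refine le_trans hScard ?_
      rw [Finset.card_insert_of_notMem (by simpa using fun h => hi1ne h.symm),
        Finset.card_singleton]
  -- row parities
  set u : Fin ℓ → ZMod 2 := fun i => ∑ j, X i j with hu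
  set v : Fin ℓ → ZMod 2 := fun i => ∑ j, X' i j with hv
  have huCS : u ∈ CS := hX
  have hvCS : v ∈ CS := hX'
  have key : ∀ r : Fin ℓ, u r ≠ v r → r.castSucc = i.castSucc ∨ r.castSucc = i1 := by
    intro r hr
    have : ∃ j, X r j ≠ X' r j := by
      by_contra hc; push_neg at hc
      exact hr (Finset.sum_congr rfl fun j _ => hc j)
    obtain ⟨j, hj⟩ := this
    have : (r.castSucc, j) ∈ S := by
      simp only [hS, Finset.mem_filter, Finset.mem_univ, true_and]
      rw [hAi, hBi]; exact hj
    rw [hpair] at this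
    simp only [Finset.mem_insert, Finset.mem_singleton, Prod.mk.injEq] at this
    rcases this with ⟨h1, _⟩ | ⟨h1, _⟩
    · exact Or.inl h1
    · exact Or.inr h1
  have huv : u = v := by
    by_contra hne'
    have h3 := hdist u huCS v hvCS hne'
    have hsub : (Finset.univ.filter fun r : Fin ℓ => u r ≠ v r) ⊆
        (Finset.univ.filter fun r : Fin ℓ => r.castSucc = i.castSucc ∨ r.castSucc = i1) := by
      intro r hr
      simp only [Finset.mem_filter, Finset.mem_univ, true_and] at hr ⊢
      exact key r hr
    have hcard2 : (Finset.univ.filter fun r : Fin ℓ =>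
        r.castSucc = i.castSucc ∨ r.castSucc = i1).card ≤ 2 := by
      apply Finset.card_le_card_of_injOn (fun r => r.castSucc)
        (t := {i.castSucc, i1}) ?_ ?_ |>.trans ?_
      · intro r hr
        simp only [Finset.coe_filter, Set.mem_setOf_eq, Finset.mem_filter, Finset.mem_univ, true_and] at hr
        simpa using hr
      · intro a _ b _ h
        exact Fin.castSucc_injective _ h
      · exact (Finset.card_insert_le _ _).trans (by simp)
    have : hammingDist u v ≤ 2 := le_trans (Finset.card_le_card hsub) hcard2
    omega
  -- row i has odd weight: contradiction
  have hrow : Even ((Finset.univ.filter fun j : Fin n => X i j ≠ X' i j).card) :=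
    even_card_ne (by have := congrFun huv i; simpa [hu, hv] using this)
  have hrowset : (Finset.univ.filter fun j : Fin n => X i j ≠ X' i j) = {j0} := by
    apply Finset.eq_singleton_iff_unique_mem.mpr
    constructor
    · simp only [Finset.mem_filter, Finset.mem_univ, true_and]; exact hij
    · intro j hj
      simp only [Finset.mem_filter, Finset.mem_univ, true_and] at hj
      have : (i.castSucc, j) ∈ S := by
        simp only [hS, Finset.mem_filter, Finset.mem_univ, true_and]
        rw [hAi, hBi]; exact hj
      rw [hpair] at this
      simp only [Finset.mem_insert, Finset.mem_singleton, Prod.mk.injEq] at this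
      rcases this with ⟨_, h2⟩ | ⟨h1, h2⟩
      · exact h2
      · exact absurd h1.symm hi1ne
  rw [hrowset, Finset.card_singleton] at hrow
  exact (Nat.not_even_one) hrow
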